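/- (Descendant characterization of the SLD; Lemma 3.2.) For distinct edges e and f of T, e ∈ spine(f) if and only if f ∈ I(e). Consequently, for e = (u,v), the strict descendants of node e in the SLD that lie on the u-side of e are exactly I^u(e), and those on the v-side are exactly I^v(e). -/

import Mathlib

/- Single tree setting: `G` is a finite tree with injective edge ranks `r`.
`edgesBetween G e f` is the set of edges strictly between edges `e` and `f`
on the unique tree path connecting them (an edge `g ∉ {e,f}` lies on this path
iff it belongs to every walk containing both `e` and `f`). -/

open SimpleGraph

variable {V : Type*}

/-- The set of edges lying strictly between edges `e` and `f` on the tree path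
connecting them (excluding `e` and `f`). -/
def edgesBetween (G : SimpleGraph V) (e f : Sym2 V) : Set (Sym2 V) :=
  {g | g ∈ G.edgeSet ∧ g ≠ e ∧ g ≠ f ∧
    ∀ (a b : V) (w : G.Walk a b), e ∈ w.edges → f ∈ w.edges → g ∈ w.edges}

/-- `f` is an adjacent superior of `e`: `r e < r f` and every edge `g` on the
path between `e` and `f` satisfies `r g < r e`. -/
def AdjSup (G : SimpleGraph V) (r : Sym2 V → ℕ) (e f : Sym2 V) : Prop :=
  f ∈ G.edgeSet ∧ r e < r f ∧ ∀ g ∈ edgesBetween G e f, r g < r e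

/-- `f` is an adjacent inferior of `e`: `r f < r e` and every edge `g` on the
path between `e` and `f` satisfies `r g < r e`. -/
def AdjInf (G : SimpleGraph V) (r : Sym2 V → ℕ) (e f : Sym2 V) : Prop :=
  f ∈ G.edgeSet ∧ r f < r e ∧ ∀ g ∈ edgesBetween G e f, r g < r e

/-- `f` is the SLD parent of `e`: the minimum-rank adjacent superior of `e`. -/
def IsParent (G : SimpleGraph V) (r : Sym2 V → ℕ) (e f : Sym2 V) : Prop :=
  AdjSup G r e f ∧ ∀ g, AdjSup G r e g → r f ≤ r g

/-- The spine of `e`: the set of edges obtained by iterating the SLD parent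
function starting from `e` (including `e` itself). -/
def spine (G : SimpleGraph V) (r : Sym2 V → ℕ) (e : Sym2 V) : Set (Sym2 V) :=
  {f | Relation.ReflTransGen (IsParent G r) e f}

/-- Edge `f` lies on the `u`-side of edge `e` (strictly closer to `u`):
`f` is reachable from `u` by a walk avoiding `e`. -/
def OnSide (G : SimpleGraph V) (e : Sym2 V) (u : V) (f : Sym2 V) : Prop :=
  ∃ (x : V) (w : G.Walk u x), f ∈ w.edges ∧ e ∉ w.edges

/-- Edges lying on the tree path from edge `f` to vertex `u`, excluding `f`
itself: the edges `g ≠ f` belonging to every walk from `u` containing `f`. -/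
def edgesBetweenEV (G : SimpleGraph V) (f : Sym2 V) (u : V) : Set (Sym2 V) :=
  {g | g ∈ G.edgeSet ∧ g ≠ f ∧ ∀ (x : V) (w : G.Walk u x), f ∈ w.edges → g ∈ w.edges}


section Aux
variable {G : SimpleGraph V} {r : Sym2 V → ℕ}

lemma between_comm {e f g : Sym2 V} :
    g ∈ edgesBetween G e f ↔ g ∈ edgesBetween G f e := by
  constructor <;> rintro ⟨h1, h2, h3, h4⟩ <;>
    exact ⟨h1, h3, h2, fun a b w he hf => h4 a b w hf he⟩

lemma glue {a b c d x : V} (w1 : G.Walk a b) (w2 : G.Walk c d)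
    (h1 : x ∈ w1.support) (h2 : x ∈ w2.support) :
    ∃ W : G.Walk a d, ∀ g, g ∈ W.edges ↔ (g ∈ w1.edges ∨ g ∈ w2.edges) := by
  classical
  refine ⟨w1.append ((w1.dropUntil x h1).reverse.append
    (((w2.takeUntil x h2).reverse).append w2)), fun g => ?_⟩
  simp only [Walk.edges_append, Walk.edges_reverse, List.mem_append, List.mem_reverse]
  constructor
  · rintro (h | h | h | h)
    · exact Or.inl h
    · exact Or.inl (Walk.edges_dropUntil_subset _ _ h)
    · exact Or.inr (Walk.edges_takeUntil_subset _ _ h)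
    · exact Or.inr h
  · rintro (h | h)
    · exact Or.inl h
    · exact Or.inr (Or.inr (Or.inr h))

lemma between_triangle {e f g : Sym2 V} (m : Sym2 V) (hg : g ∈ edgesBetween G e f) :
    g = m ∨ g ∈ edgesBetween G e m ∨ g ∈ edgesBetween G m f := by
  classical
  obtain ⟨hgE, hge, hgf, hgw⟩ := hg
  by_contra hcon
  push_neg at hcon
  obtain ⟨hgm, hem, hmf⟩ := hcon
  have h1 : ∃ (a b : V) (w : G.Walk a b), e ∈ w.edges ∧ m ∈ w.edges ∧ g ∉ w.edges := by
    by_contra h; push_neg at h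
    exact hem ⟨hgE, hge, hgm, fun a b w he hm => h a b w he hm⟩
  have h2 : ∃ (a b : V) (w : G.Walk a b), m ∈ w.edges ∧ f ∈ w.edges ∧ g ∉ w.edges := by
    by_contra h; push_neg at h
    exact hmf ⟨hgE, hgm, hgf, fun a b w hm hf => h a b w hm hf⟩
  obtain ⟨a1, b1, wa, hew, hmw, hgw1⟩ := h1
  obtain ⟨a2, b2, wb, hmw2, hfw, hgw2⟩ := h2
  induction m using Sym2.ind with
  | _ p q =>
    have hp1 : p ∈ wa.support := wa.fst_mem_support_of_mem_edges hmw
    have hp2 : p ∈ wb.support := wb.fst_mem_support_of_mem_edges hmw2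
    obtain ⟨W, hW⟩ := glue wa wb hp1 hp2
    have := hgw _ _ W ((hW e).2 (Or.inl hew)) ((hW f).2 (Or.inr hfw))
    rcases (hW g).1 this with h | h
    · exact hgw1 h
    · exact hgw2 h

lemma walk_split {x y : V} (w : G.Walk x y) (hw : w.edges.Nodup) {g : Sym2 V}
    (hg : g ∈ w.edges) :
    ∃ (s t : V) (w1 : G.Walk x s) (w2 : G.Walk t y) (h : G.Adj s t),
      g = s(s, t) ∧ g ∉ w1.edges ∧ g ∉ w2.edges ∧
      w = w1.append (Walk.cons h w2) := by
  induction w with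
  | nil => simp at hg
  | @cons u v z h p ih =>
    rw [Walk.edges_cons, List.nodup_cons] at hw
    rw [Walk.edges_cons, List.mem_cons] at hg
    rcases hg with hg | hg
    · subst hg
      exact ⟨u, v, Walk.nil, p, h, rfl, by simp, hw.1, by simp⟩
    · obtain ⟨s, t, w1, w2, hadj, hgst, hg1, hg2, heq⟩ := ih hw.2 hg
      refine ⟨s, t, Walk.cons h w1, w2, hadj, hgst, ?_, hg2, by rw [Walk.cons_append, heq]⟩
      rw [Walk.edges_cons, List.mem_cons]
      rintro (hc | hc)
      · subst hc; exact hw.1 hg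
      · exact hg1 hc

lemma first_exceed {x y : V} (w : G.Walk x y) {n : ℕ}
    (hex : ∃ m ∈ w.edges, n < r m) :
    ∃ (s t : V) (w1 : G.Walk x s) (w2 : G.Walk t y) (h : G.Adj s t),
      n < r s(s, t) ∧ (∀ h' ∈ w1.edges, ¬ n < r h') ∧
      w = w1.append (Walk.cons h w2) := by
  induction w with
  | nil => simp at hex
  | @cons u v z h p ih =>
    by_cases hc : n < r s(u, v)
    · exact ⟨u, v, Walk.nil, p, h, hc, by simp, by simp⟩
    · have hex' : ∃ m ∈ p.edges, n < r m := by
        obtain ⟨m, hm, hmr⟩ := hex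
        rw [Walk.edges_cons, List.mem_cons] at hm
        rcases hm with rfl | hm
        · exact absurd hmr hc
        · exact ⟨m, hm, hmr⟩
      obtain ⟨s, t, w1, w2, hadj, h1, h2, heq⟩ := ih hex'
      refine ⟨s, t, Walk.cons h w1, w2, hadj, h1, ?_, by rw [Walk.cons_append, heq]⟩
      intro h' hh'
      rw [Walk.edges_cons, List.mem_cons] at hh'
      rcases hh' with rfl | hh'
      · exact hc
      · exact h2 h' hh'

lemma concat_isPath {x s t : V} {w1 : G.Walk x s} (hp : w1.IsPath) (h : G.Adj s t)
    (ht : t ∉ w1.support) : (w1.concat h).IsPath := by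
  rw [Walk.isPath_def, Walk.support_concat]
  rw [Walk.isPath_def] at hp
  simp [List.concat_eq_append, List.nodup_append, hp, ht]
  exact fun a ha hat => ht (hat ▸ ha)

lemma canon (hT : G.IsTree) {e f : Sym2 V} (he : e ∈ G.edgeSet) (hf : f ∈ G.edgeSet)
    (hef : e ≠ f) :
    ∃ (x x' y' y : V) (P : G.Walk x y), P.IsPath ∧ f = s(x, x') ∧ e = s(y', y) ∧
      f ∈ P.edges ∧ e ∈ P.edges := by
  classical
  induction f using Sym2.ind with
  | _ a b =>
  induction e using Sym2.ind with
  | _ c d =>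
  rw [SimpleGraph.mem_edgeSet] at he hf
  obtain ⟨w0⟩ := hT.isConnected.preconnected b c
  set p0 := w0.bypass with hp0def
  have hp0 : p0.IsPath := w0.bypass_isPath
  -- step 1: ensure f is in the path, starting at an endpoint of f
  have step1 : ∃ (x x' : V) (P1 : G.Walk x c), P1.IsPath ∧ s(a, b) = s(x, x') ∧
      s(a, b) ∈ P1.edges := by
    by_cases hfp : s(a, b) ∈ p0.edges
    · exact ⟨b, a, p0, hp0, Sym2.eq_swap, hfp⟩
    · have ha : a ∉ p0.support := by
        intro ha
        have hq : (p0.takeUntil a ha).IsPath := hp0.takeUntil ha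
        have hone : (Walk.cons hf.symm Walk.nil : G.Walk b a).IsPath := by simp [hf.ne']
        have := hT.IsAcyclic.path_unique ⟨p0.takeUntil a ha, hq⟩ ⟨Walk.cons hf.symm Walk.nil, hone⟩
        have hmem : s(a, b) ∈ (p0.takeUntil a ha).edges := by
          have : (p0.takeUntil a ha) = Walk.cons hf.symm Walk.nil := congrArg Subtype.val this
          rw [this]; simp [Sym2.eq_swap]
        exact hfp (Walk.edges_takeUntil_subset _ _ hmem)
      exact ⟨a, b, Walk.cons hf p0, hp0.cons ha, rfl, by simp⟩
  obtain ⟨x, x', P1, hP1, hfx, hfP1⟩ := step1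
  -- step 2: ensure e is in the path, ending at an endpoint of e
  by_cases hep : s(c, d) ∈ P1.edges
  · exact ⟨x, x', d, c, P1, hP1, hfx, Sym2.eq_swap, hfP1, hep⟩
  · have hd : d ∉ P1.support := by
      intro hd
      have hq : (P1.dropUntil d hd).IsPath := hP1.dropUntil hd
      have hone : (Walk.cons he.symm Walk.nil : G.Walk d c).IsPath := by simp [he.ne']
      have := hT.IsAcyclic.path_unique ⟨P1.dropUntil d hd, hq⟩ ⟨Walk.cons he.symm Walk.nil, hone⟩
      have hmem : s(c, d) ∈ (P1.dropUntil d hd).edges := by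
        have : (P1.dropUntil d hd) = Walk.cons he.symm Walk.nil := congrArg Subtype.val this
        rw [this]; simp [Sym2.eq_swap]
      exact hep (Walk.edges_dropUntil_subset _ _ hmem)
    refine ⟨x, x', c, d, P1.concat he, concat_isPath hP1 he hd, hfx, rfl, ?_, ?_⟩
    · rw [Walk.edges_concat, List.concat_eq_append]; exact List.mem_append_left _ hfP1
    · rw [Walk.edges_concat]; simp

lemma mem_between_of_path (hac : G.IsAcyclic) {x x' y' y : V} {P : G.Walk x y}
    (hP : P.IsPath) {e f g : Sym2 V} (hfx : f = s(x, x')) (hey : e = s(y', y))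
    (hfP : f ∈ P.edges) (heP : e ∈ P.edges) (hgP : g ∈ P.edges)
    (hgf : g ≠ f) (hge : g ≠ e) : g ∈ edgesBetween G f e := by
  classical
  refine ⟨P.edges_subset_edgeSet hgP, hgf, hge, ?_⟩
  intro a b w hfw hew
  by_contra hgw
  obtain ⟨s, t, w1, w2, hadj, hgst, hg1, hg2, hPeq⟩ :=
    walk_split P hP.isTrail.edges_nodup hgP
  subst hgst
  have hbr := isAcyclic_iff_forall_adj_isBridge.mp hac hadj
  rw [SimpleGraph.isBridge_iff_adj_and_forall_walk_mem_edges] at hbr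
  have hx : x ∈ w.support := by
    subst hfx; exact w.fst_mem_support_of_mem_edges hfw
  have hy : y ∈ w.support := by
    subst hey; exact w.snd_mem_support_of_mem_edges hew
  let q : G.Walk s t := w1.reverse.append
    (((w.takeUntil x hx).reverse.append (w.takeUntil y hy)).append w2.reverse)
  have hmem := hbr q
  simp only [q, Walk.edges_append, Walk.edges_reverse, List.mem_append,
    List.mem_reverse] at hmem
  rcases hmem with h | (h | h) | h
  · exact hg1 h
  · exact hgw (Walk.edges_takeUntil_subset _ _ h)
  · exact hgw (Walk.edges_takeUntil_subset _ _ h)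
  · exact hg2 h

lemma forward_aux {e f : Sym2 V} (hf : f ∈ G.edgeSet)
    (h : Relation.ReflTransGen (IsParent G r) f e) : f = e ∨ AdjInf G r e f := by
  induction h with
  | refl => exact Or.inl rfl
  | @tail b c hfb hbc ih =>
    right
    obtain ⟨⟨hcE, hrbc, hbetbc⟩, -⟩ := hbc
    rcases ih with rfl | ⟨hfE, hrfb, hbetbf⟩
    · refine ⟨hf, hrbc, fun g hg => ?_⟩
      exact lt_trans (hbetbc g (between_comm.mp hg)) hrbc
    · refine ⟨hf, lt_trans hrfb hrbc, fun g hg => ?_⟩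
      rcases between_triangle b (between_comm.mp hg) with rfl | h | h
      · exact hrbc
      · exact lt_trans (hbetbf g (between_comm.mp h)) hrbc
      · exact lt_trans (hbetbc g h) hrbc

lemma exists_parent (hT : G.IsTree) (hr : Set.InjOn r G.edgeSet)
    {e f : Sym2 V} (he : e ∈ G.edgeSet) (hf : f ∈ G.edgeSet) (hef : e ≠ f)
    (hinf : AdjInf G r e f) :
    ∃ h, IsParent G r f h ∧ r h ≤ r e ∧ (h = e ∨ AdjInf G r e h) := by
  classical
  obtain ⟨x, x', y', y, P, hP, hfx, hey, hfP, heP⟩ := canon hT he hf hef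
  obtain ⟨s, t, w1, w2, hadj, hrg, hw1, hPeq⟩ :=
    first_exceed (r := r) P ⟨e, heP, hinf.2.1⟩
  set g := s(s, t) with hgdef
  have hgE : g ∈ G.edgeSet := hadj
  have hgf : g ≠ f := fun hc => by rw [hc] at hrg; exact lt_irrefl _ hrg
  have hgP : g ∈ P.edges := by
    rw [hPeq, Walk.edges_append, Walk.edges_cons]; simp; exact Or.inr (Or.inl rfl)
  -- f is in w1
  have hfw1 : f ∈ w1.edges := by
    have hfmem : f ∈ w1.edges ∨ f ∈ (Walk.cons hadj w2).edges := by
      rw [← List.mem_append, ← Walk.edges_append, ← hPeq]; exact hfP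
    rcases hfmem with h | h
    · exact h
    · exfalso
      rw [Walk.edges_cons, List.mem_cons] at h
      rcases h with h | h
      · exact hgf (h ▸ rfl)
      · -- x would appear in both w1 and w2's supports
        have hx2 : x ∈ w2.support := by
          subst hfx; exact w2.fst_mem_support_of_mem_edges h
        have hx1 : x ∈ w1.support := w1.start_mem_support
        have hnd : P.support.Nodup := hP.support_nodup
        rw [hPeq, Walk.support_append, Walk.support_cons] at hnd
        exact (List.disjoint_of_nodup_append hnd) hx1 (by simpa using hx2)
  -- Q = w1 with edge g appended
  have hsup : AdjSup G r f g := by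
    refine ⟨hgE, hrg, fun h' hh' => ?_⟩
    obtain ⟨hh'E, hh'f, hh'g, hh'w⟩ := hh'
    have hQ : h' ∈ (w1.concat hadj).edges := by
      refine hh'w x t (w1.concat hadj) ?_ ?_
      · rw [Walk.edges_concat, List.concat_eq_append]
        exact List.mem_append_left _ hfw1
      · rw [Walk.edges_concat, List.concat_eq_append]; simp; exact Or.inr rfl
    rw [Walk.edges_concat, List.concat_eq_append, List.mem_append] at hQ
    rcases hQ with hQ | hQ
    · have hle : ¬ r f < r h' := hw1 h' hQ
      have hne : r h' ≠ r f := fun hc => hh'f (hr hh'E hf hc)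
      omega
    · simp at hQ; exact absurd hQ hh'g
  -- r g ≤ r e
  have hgle : r g ≤ r e := by
    by_cases hge : g = e
    · rw [hge]
    · have : g ∈ edgesBetween G f e :=
        mem_between_of_path hT.IsAcyclic hP hfx hey hfP heP hgP hgf hge
      exact le_of_lt (hinf.2.2 g (between_comm.mp this))
  -- take minimum-rank adjacent superior
  have hSne : (r '' {g' | AdjSup G r f g'}).Nonempty := ⟨r g, g, hsup, rfl⟩
  obtain ⟨h, hhS, hhmin⟩ : ∃ h, AdjSup G r f h ∧ ∀ g', AdjSup G r f g' → r h ≤ r g' := by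
    obtain ⟨h, hh, hrh⟩ := Nat.sInf_mem hSne
    exact ⟨h, hh, fun g' hg' => hrh ▸ Nat.sInf_le ⟨g', hg', rfl⟩⟩
  have hhle : r h ≤ r e := le_trans (hhmin g hsup) hgle
  refine ⟨h, ⟨hhS, hhmin⟩, hhle, ?_⟩
  by_cases hhe : h = e
  · exact Or.inl hhe
  · right
    refine ⟨hhS.1, lt_of_le_of_ne hhle (fun hc => hhe (hr hhS.1 he hc)), fun g' hg' => ?_⟩
    rcases between_triangle f hg' with rfl | hb | hb
    · exact hinf.2.1
    · exact hinf.2.2 g' hb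
    · exact lt_trans (hhS.2.2 g' hb) hinf.2.1

lemma backward (hT : G.IsTree) (hr : Set.InjOn r G.edgeSet)
    {e : Sym2 V} (he : e ∈ G.edgeSet) :
    ∀ (n : ℕ) (f : Sym2 V), f ∈ G.edgeSet → e ≠ f → AdjInf G r e f → r e - r f ≤ n →
      Relation.ReflTransGen (IsParent G r) f e := by
  intro n
  induction n with
  | zero =>
    intro f hf hef hinf hle
    have := hinf.2.1
    omega
  | succ n ih =>
    intro f hf hef hinf hle
    obtain ⟨h, hp, hhe, hcase⟩ := exists_parent hT hr he hf hef hinf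
    rcases hcase with rfl | hinf'
    · exact Relation.ReflTransGen.single hp
    · have hrfh : r f < r h := hp.1.2.1
      have hrhe : r h < r e := hinf'.2.1
      have hne : e ≠ h := fun hc => by rw [← hc] at hrhe; exact lt_irrefl _ hrhe
      exact Relation.ReflTransGen.head hp
        (ih h hp.1.1 hne hinf' (by omega))

end Aux

/-- Descendant characterization of the SLD: for distinct edges `e, f`,
`e ∈ spine f` iff `f ∈ I(e)`; consequently, for `e = (u,v)` the strict
descendants of node `e` lying on the `u`-side are exactly `I^u(e)`. -/
theorem stmt3 [Fintype V] (G : SimpleGraph V) (hT : G.IsTree)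
    (r : Sym2 V → ℕ) (hr : Set.InjOn r G.edgeSet) :
    (∀ e f : Sym2 V, e ∈ G.edgeSet → f ∈ G.edgeSet → e ≠ f →
      (e ∈ spine G r f ↔ AdjInf G r e f)) ∧
    (∀ u v : V, G.Adj u v → ∀ f ∈ G.edgeSet, f ≠ s(u, v) →
      ((s(u, v) ∈ spine G r f ∧ OnSide G s(u, v) u f) ↔
        (AdjInf G r s(u, v) f ∧ OnSide G s(u, v) u f))) := by
  have part1 : ∀ e f : Sym2 V, e ∈ G.edgeSet → f ∈ G.edgeSet → e ≠ f →
      (e ∈ spine G r f ↔ AdjInf G r e f) := by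
    intro e f he hf hef
    constructor
    · intro hsp
      rcases forward_aux hf hsp with rfl | h
      · exact absurd rfl hef
      · exact h
    · intro hinf
      exact backward hT hr he (r e - r f) f hf hef hinf le_rfl
  refine ⟨part1, ?_⟩
  intro u v huv f hfE hne
  have he : s(u, v) ∈ G.edgeSet := huv
  constructor
  · rintro ⟨h1, h2⟩; exact ⟨(part1 _ _ he hfE (Ne.symm hne)).mp h1, h2⟩
  · rintro ⟨h1, h2⟩; exact ⟨(part1 _ _ he hfE (Ne.symm hne)).mpr h1, h2⟩
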